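/- Let a⃗ and b⃗ be unit vectors in ℝ³, and let A_± = (1 ± a⃗·σ⃗)/2, B_± = (1 ± b⃗·σ⃗)/2 be the corresponding rank-1 projective measurements on ℂ², where σ⃗ = (σ_x, σ_y, σ_z) are the Pauli matrices. Then the two-copy estimation fidelity F = (1/24)·Σ_{s,t ∈ {±}} ‖Q(A_s ⊗ B_t)‖, with Q(A⊗B) = tr(A)tr(B) + tr(AB) + tr(B)A + tr(A)B + AB + BA, equals (3 + √(1 + |a⃗ × b⃗|))/6. In particular F ≥ 2/3, with equality iff a⃗ and b⃗ are parallel or antiparallel. -/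

import Mathlib

open scoped Matrix.Norms.L2Operator

/-- The operator `Q(A⊗B) = tr(A)tr(B)·1 + tr(AB)·1 + tr(B)·A + tr(A)·B + AB + BA`. -/
noncomputable def Qop (A B : Matrix (Fin 2) (Fin 2) ℂ) : Matrix (Fin 2) (Fin 2) ℂ :=
  (A.trace * B.trace) • (1 : Matrix (Fin 2) (Fin 2) ℂ) +
    (A * B).trace • (1 : Matrix (Fin 2) (Fin 2) ℂ) +
    B.trace • A + A.trace • B + A * B + B * A

/-- `a⃗·σ⃗` for a real 3-vector `a⃗` and the Pauli matrices. -/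
noncomputable def pauliDot (a : Fin 3 → ℝ) : Matrix (Fin 2) (Fin 2) ℂ :=
  (a 0 : ℂ) • !![0, 1; 1, 0] +
    (a 1 : ℂ) • !![0, -Complex.I; Complex.I, 0] +
    (a 2 : ℂ) • !![1, 0; 0, -1]

/-- The projector `(1 + s a⃗·σ⃗)/2` (s = ±1). -/
noncomputable def blochProj (s : ℝ) (a : Fin 3 → ℝ) : Matrix (Fin 2) (Fin 2) ℂ :=
  ((1 : ℂ) / 2) • ((1 : Matrix (Fin 2) (Fin 2) ℂ) + (s : ℂ) • pauliDot a)

/-- The cross product of two 3-vectors. -/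
def cross3 (a b : Fin 3 → ℝ) : Fin 3 → ℝ :=
  ![a 1 * b 2 - a 2 * b 1, a 2 * b 0 - a 0 * b 2, a 0 * b 1 - a 1 * b 0]

/-- Two-copy estimation fidelity of the product of the two rank-1 projective
measurements with Bloch vectors `±a⃗`, `±b⃗`. -/
noncomputable def fid2 (a b : Fin 3 → ℝ) : ℝ :=
  (1 / 24) * (‖Qop (blochProj 1 a) (blochProj 1 b)‖ +
    ‖Qop (blochProj 1 a) (blochProj (-1) b)‖ +
    ‖Qop (blochProj (-1) a) (blochProj 1 b)‖ +
    ‖Qop (blochProj (-1) a) (blochProj (-1) b)‖)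

section Aux

open Complex Matrix

lemma pauliDot_eq (a : Fin 3 → ℝ) :
    pauliDot a = !![(a 2 : ℂ), (a 0 : ℂ) - (a 1 : ℂ) * I;
      (a 0 : ℂ) + (a 1 : ℂ) * I, -(a 2 : ℂ)] := by
  unfold pauliDot
  ext i j
  fin_cases i <;> fin_cases j <;> (simp; try ring)

lemma blochProj_eq (s : ℝ) (a : Fin 3 → ℝ) :
    blochProj s a = !![(1 + s * a 2 : ℂ) / 2, (s * a 0 - s * a 1 * I : ℂ) / 2;
      (s * a 0 + s * a 1 * I : ℂ) / 2, (1 - s * a 2 : ℂ) / 2] := by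
  unfold blochProj
  rw [pauliDot_eq]
  ext i j
  fin_cases i <;> fin_cases j <;> (simp [Matrix.one_apply]; try ring)

set_option maxHeartbeats 2000000 in
lemma Qcomp (s t : ℝ) (a b : Fin 3 → ℝ) :
    Qop (blochProj s a) (blochProj t b) =
      ((3 + s * t * (∑ i, a i * b i) : ℝ) : ℂ) • (1 : Matrix (Fin 2) (Fin 2) ℂ) +
        pauliDot (s • a + t • b) := by
  rw [Qop, blochProj_eq, blochProj_eq, pauliDot_eq]
  ext i j
  fin_cases i <;> fin_cases j <;>
    (simp [Matrix.mul_apply, Fin.sum_univ_two, Fin.sum_univ_three,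
      Matrix.trace_fin_two, Matrix.one_apply, Complex.ext_iff];
      try (push_cast; ring); try norm_num)

lemma pauliDot_herm (v : Fin 3 → ℝ) : (pauliDot v)ᴴ = pauliDot v := by
  rw [pauliDot_eq]
  ext i j
  fin_cases i <;> fin_cases j <;>
    simp [Matrix.conjTranspose_apply, Complex.ext_iff]

lemma pauliDot_mul_self (v : Fin 3 → ℝ) :
    pauliDot v * pauliDot v = ((∑ i, v i ^ 2 : ℝ) : ℂ) • (1 : Matrix (Fin 2) (Fin 2) ℂ) := by
  rw [pauliDot_eq]
  ext i j
  fin_cases i <;> fin_cases j <;>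
    (simp [Matrix.mul_apply, Fin.sum_univ_two, Fin.sum_univ_three, Matrix.one_apply,
      pow_two, Complex.ext_iff]; try (push_cast; ring); try norm_num)

lemma norm_one_mat : ‖(1 : Matrix (Fin 2) (Fin 2) ℂ)‖ = 1 := by
  have h := Matrix.l2_opNorm_conjTranspose_mul_self (1 : Matrix (Fin 2) (Fin 2) ℂ)
  simp only [Matrix.conjTranspose_one, mul_one] at h
  have h1 : ‖(1 : Matrix (Fin 2) (Fin 2) ℂ)‖ ≠ 0 := by
    simp [norm_ne_zero_iff]
  have h2 : ‖(1 : Matrix (Fin 2) (Fin 2) ℂ)‖ * 1 = ‖(1 : Matrix (Fin 2) (Fin 2) ℂ)‖ *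
      ‖(1 : Matrix (Fin 2) (Fin 2) ℂ)‖ := by rw [mul_one]; exact h
  exact (mul_left_cancel₀ h1 h2).symm

lemma norm_pauliDot (v : Fin 3 → ℝ) :
    ‖pauliDot v‖ = Real.sqrt (∑ i, v i ^ 2) := by
  have h := Matrix.l2_opNorm_conjTranspose_mul_self (pauliDot v)
  rw [pauliDot_herm, pauliDot_mul_self, norm_smul, norm_one_mat, mul_one] at h
  have hnn : (0 : ℝ) ≤ ∑ i, v i ^ 2 := by positivity
  rw [Complex.norm_real, Real.norm_of_nonneg hnn] at h
  rw [h, Real.sqrt_mul_self (norm_nonneg _)]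

lemma eig_lower (M : Matrix (Fin 2) (Fin 2) ℂ) (c : ℝ) (x : Fin 2 → ℂ) (hx : x ≠ 0)
    (hM : M *ᵥ x = (c : ℂ) • x) (hc : 0 ≤ c) : c ≤ ‖M‖ := by
  set y : EuclideanSpace ℂ (Fin 2) := (WithLp.equiv 2 (Fin 2 → ℂ)).symm x with hy
  have h1 := Matrix.l2_opNorm_mulVec M y
  have h2 : (EuclideanSpace.equiv (Fin 2) ℂ).symm (M *ᵥ y) = (c : ℂ) • y := by
    apply (WithLp.equiv 2 (Fin 2 → ℂ)).injective
    simpa [hy] using hM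
  rw [h2, norm_smul] at h1
  have hy0 : 0 < ‖y‖ := by
    rw [norm_pos_iff]
    simpa [hy] using hx
  have hcn : ‖(c : ℂ)‖ = c := by
    rw [Complex.norm_real, Real.norm_of_nonneg hc]
  rw [hcn] at h1
  exact le_of_mul_le_mul_right (by linarith) hy0

lemma norm_formula (α : ℝ) (v : Fin 3 → ℝ) (h : Real.sqrt (∑ i, v i ^ 2) ≤ α) :
    ‖(α : ℂ) • (1 : Matrix (Fin 2) (Fin 2) ℂ) + pauliDot v‖
      = α + Real.sqrt (∑ i, v i ^ 2) := by
  set r := Real.sqrt (∑ i, v i ^ 2) with hr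
  have hr0 : 0 ≤ r := Real.sqrt_nonneg _
  have hα : 0 ≤ α := le_trans hr0 h
  have hr2 : r ^ 2 = v 0 ^ 2 + v 1 ^ 2 + v 2 ^ 2 := by
    rw [hr, Real.sq_sqrt (by positivity), Fin.sum_univ_three]
  set M := (α : ℂ) • (1 : Matrix (Fin 2) (Fin 2) ℂ) + pauliDot v with hM
  have hub : ‖M‖ ≤ α + r := by
    calc ‖M‖ ≤ ‖(α : ℂ) • (1 : Matrix (Fin 2) (Fin 2) ℂ)‖ + ‖pauliDot v‖ := norm_add_le _ _
    _ = α + r := by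
        rw [norm_smul, norm_one_mat, mul_one, Complex.norm_real, Real.norm_of_nonneg hα,
          norm_pauliDot]
  have hlb : α + r ≤ ‖M‖ := by
    by_cases hz : r + v 2 = 0
    · have h01 : v 0 ^ 2 + v 1 ^ 2 = 0 := by nlinarith [hr2]
      have h0 : v 0 = 0 := by nlinarith [sq_nonneg (v 0), sq_nonneg (v 1)]
      have h1 : v 1 = 0 := by nlinarith [sq_nonneg (v 0), sq_nonneg (v 1)]
      refine eig_lower M (α + r) ![0, 1] ?_ ?_ (by linarith)
      · intro hx
        have := congrFun hx 1
        simp at this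
      · have hv2 : v 2 = -r := by linarith
        funext i
        fin_cases i <;>
          simp [hM, pauliDot_eq, Matrix.mulVec, dotProduct, Fin.sum_univ_two,
            Matrix.one_apply, h0, h1, hv2, Complex.ext_iff]
    · refine eig_lower M (α + r) ![((r + v 2 : ℝ) : ℂ), (v 0 : ℂ) + (v 1 : ℂ) * I] ?_ ?_
        (by linarith)
      · intro hx
        have := congrFun hx 0
        simp at this
        exact hz (by exact_mod_cast this)
      · funext i
        fin_cases i <;>
          (simp [hM, pauliDot_eq, Matrix.mulVec, dotProduct, Fin.sum_univ_two,
            Matrix.one_apply, Complex.ext_iff]; push_cast; constructor <;>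
            linarith [hr2])
  linarith

lemma lagrange (a b : Fin 3 → ℝ) :
    (∑ i, cross3 a b i ^ 2)
      = (∑ i, a i ^ 2) * (∑ i, b i ^ 2) - (∑ i, a i * b i) ^ 2 := by
  simp [cross3, Fin.sum_univ_three]
  ring

lemma normQ (s t : ℝ) (a b : Fin 3 → ℝ) (ha : ∑ i, a i ^ 2 = 1) (hb : ∑ i, b i ^ 2 = 1)
    (hs : s = 1 ∨ s = -1) (ht : t = 1 ∨ t = -1) :
    ‖Qop (blochProj s a) (blochProj t b)‖
      = 3 + s * t * (∑ i, a i * b i)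
        + Real.sqrt (2 + 2 * (s * t * (∑ i, a i * b i))) := by
  have hs2 : s ^ 2 = 1 := by rcases hs with h | h <;> rw [h] <;> norm_num
  have ht2 : t ^ 2 = 1 := by rcases ht with h | h <;> rw [h] <;> norm_num
  have hcross : (0 : ℝ) ≤ ∑ i, cross3 a b i ^ 2 :=
    Finset.sum_nonneg fun i _ => sq_nonneg _
  have habs : (∑ i, a i * b i) ^ 2 ≤ 1 := by
    have := lagrange a b
    rw [ha, hb] at this
    nlinarith [hcross]
  have hst2 : (s * t) ^ 2 = 1 := by rw [mul_pow, hs2, ht2]; norm_num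
  have hu2 : (s * t * (∑ i, a i * b i)) ^ 2 ≤ 1 := by
    have : (s * t * (∑ i, a i * b i)) ^ 2 = (s * t) ^ 2 * (∑ i, a i * b i) ^ 2 := by ring
    rw [this, hst2, one_mul]; exact habs
  have hstc : -1 ≤ s * t * (∑ i, a i * b i) ∧ s * t * (∑ i, a i * b i) ≤ 1 := by
    constructor <;>
      nlinarith [hu2, sq_nonneg (s * t * (∑ i, a i * b i) - 1),
        sq_nonneg (s * t * (∑ i, a i * b i) + 1)]
  have hsum : ∑ i, (s • a + t • b) i ^ 2 = 2 + 2 * (s * t * (∑ i, a i * b i)) := by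
    rw [Fin.sum_univ_three] at ha hb ⊢
    simp only [Pi.add_apply, Pi.smul_apply, smul_eq_mul, Fin.sum_univ_three]
    linear_combination s ^ 2 * ha + t ^ 2 * hb + hs2 + ht2
  have hpre : Real.sqrt (∑ i, (s • a + t • b) i ^ 2) ≤ 3 + s * t * (∑ i, a i * b i) := by
    rw [hsum]
    have h4 : Real.sqrt (2 + 2 * (s * t * (∑ i, a i * b i))) ≤ Real.sqrt 4 :=
      Real.sqrt_le_sqrt (by linarith [hstc.2])
    have : Real.sqrt 4 = 2 := by
      rw [show (4 : ℝ) = 2 ^ 2 by norm_num, Real.sqrt_sq (by norm_num)]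
    rw [this] at h4
    linarith [hstc.1]
  rw [Qcomp, norm_formula _ _ hpre, hsum]

end Aux

set_option maxHeartbeats 4000000 in
/-- for unit Bloch vectors a⃗, b⃗ the two-copy estimation fidelity
equals `(3 + √(1 + |a⃗ × b⃗|))/6`; in particular `F ≥ 2/3`, with equality iff
a⃗ and b⃗ are parallel or antiparallel. -/
theorem stmt_19 (a b : Fin 3 → ℝ)
    (ha : ∑ i, a i ^ 2 = 1) (hb : ∑ i, b i ^ 2 = 1) :
    fid2 a b = (3 + Real.sqrt (1 + Real.sqrt (∑ i, cross3 a b i ^ 2))) / 6 ∧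
    2 / 3 ≤ fid2 a b ∧
    (fid2 a b = 2 / 3 ↔ b = a ∨ b = -a) := by
  have n11 := normQ 1 1 a b ha hb (Or.inl rfl) (Or.inl rfl)
  have n1m := normQ 1 (-1) a b ha hb (Or.inl rfl) (Or.inr rfl)
  have nm1 := normQ (-1) 1 a b ha hb (Or.inr rfl) (Or.inl rfl)
  have nmm := normQ (-1) (-1) a b ha hb (Or.inr rfl) (Or.inr rfl)
  set c := ∑ i, a i * b i with hc
  have hcross : (0 : ℝ) ≤ ∑ i, cross3 a b i ^ 2 :=
    Finset.sum_nonneg fun i _ => sq_nonneg _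
  have hlag : (∑ i, cross3 a b i ^ 2) = 1 - c ^ 2 := by
    have := lagrange a b
    rw [ha, hb] at this
    rw [this]; ring
  have habs : c ^ 2 ≤ 1 := by nlinarith [hcross, hlag]
  have hcl : -1 ≤ c := by nlinarith [sq_nonneg (c + 1)]
  have hcu : c ≤ 1 := by nlinarith [sq_nonneg (c - 1)]
  -- simplify the four norms
  have e11 : ‖Qop (blochProj 1 a) (blochProj 1 b)‖ = 3 + c + Real.sqrt (2 + 2 * c) := by
    rw [n11]; norm_num
  have e1m : ‖Qop (blochProj 1 a) (blochProj (-1) b)‖ = 3 - c + Real.sqrt (2 - 2 * c) := by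
    rw [n1m]; rw [show 2 + 2 * (1 * (-1) * c) = 2 - 2 * c by ring]; ring_nf
  have em1 : ‖Qop (blochProj (-1) a) (blochProj 1 b)‖ = 3 - c + Real.sqrt (2 - 2 * c) := by
    rw [nm1]; rw [show 2 + 2 * ((-1) * 1 * c) = 2 - 2 * c by ring]; ring_nf
  have emm : ‖Qop (blochProj (-1) a) (blochProj (-1) b)‖ = 3 + c + Real.sqrt (2 + 2 * c) := by
    rw [nmm]; rw [show 2 + 2 * ((-1) * (-1) * c) = 2 + 2 * c by ring]; ring_nf
  set s := Real.sqrt (1 - c ^ 2) with hs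
  have hs0 : 0 ≤ s := Real.sqrt_nonneg _
  have hP0 : (0 : ℝ) ≤ 2 + 2 * c := by linarith
  have hM0 : (0 : ℝ) ≤ 2 - 2 * c := by linarith
  have hPM : Real.sqrt (2 + 2 * c) * Real.sqrt (2 - 2 * c) = 2 * s := by
    rw [← Real.sqrt_mul hP0, show (2 + 2 * c) * (2 - 2 * c) = 2 ^ 2 * (1 - c ^ 2) by ring,
      Real.sqrt_mul (by positivity), Real.sqrt_sq (by norm_num), hs]
  have hkey : Real.sqrt (2 + 2 * c) + Real.sqrt (2 - 2 * c)
      = 2 * Real.sqrt (1 + s) := by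
    have h1 : Real.sqrt (2 + 2 * c) + Real.sqrt (2 - 2 * c)
        = Real.sqrt (4 + 4 * s) := by
      rw [← Real.sqrt_sq (by positivity : (0:ℝ) ≤ Real.sqrt (2 + 2 * c) + Real.sqrt (2 - 2 * c))]
      congr 1
      rw [add_sq, Real.sq_sqrt hP0, Real.sq_sqrt hM0]
      linarith [hPM]
    rw [h1, show (4 : ℝ) + 4 * s = 2 ^ 2 * (1 + s) by ring,
      Real.sqrt_mul (by positivity), Real.sqrt_sq (by norm_num)]
  have hfid : fid2 a b = (3 + Real.sqrt (1 + s)) / 6 := by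
    rw [fid2, e11, e1m, em1, emm]
    have : Real.sqrt (2 + 2 * c) + Real.sqrt (2 - 2 * c) = 2 * Real.sqrt (1 + s) := hkey
    nlinarith [this]
  have hfid' : fid2 a b = (3 + Real.sqrt (1 + Real.sqrt (∑ i, cross3 a b i ^ 2))) / 6 := by
    rw [hfid, hlag]
  have hone : (1 : ℝ) ≤ Real.sqrt (1 + s) := by
    nlinarith [Real.sq_sqrt (show (0:ℝ) ≤ 1 + s by linarith), Real.sqrt_nonneg (1 + s),
      sq_nonneg (Real.sqrt (1 + s) - 1)]
  clear n11 n1m nm1 nmm e11 e1m em1 emm hPM hkey hfid'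
  refine ⟨by rw [hfid, hlag], by rw [hfid]; linarith, ?_⟩
  rw [hfid]
  constructor
  · intro h
    have h1 : Real.sqrt (1 + s) = 1 := by linarith
    have h2 : 1 + s = 1 := by
      rwa [Real.sqrt_eq_one] at h1
    have h3 : s = 0 := by linarith
    have h4 : 1 - c ^ 2 = 0 := by
      rw [hs] at h3
      exact (Real.sqrt_eq_zero (by nlinarith)).mp h3
    have h5 : (c - 1) * (c + 1) = 0 := by nlinarith
    rcases mul_eq_zero.mp h5 with h6 | h6
    · left
      have hc1 : c = 1 := by linarith
      have hz : (b 0 - a 0) ^ 2 + (b 1 - a 1) ^ 2 + (b 2 - a 2) ^ 2 = 0 := by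
        rw [Fin.sum_univ_three] at ha hb
        rw [hc, Fin.sum_univ_three] at hc1
        nlinarith
      have q0 : b 0 = a 0 := by
        have h0 : (b 0 - a 0) ^ 2 = 0 := by
          nlinarith [sq_nonneg (b 1 - a 1), sq_nonneg (b 2 - a 2)]
        have := sq_eq_zero_iff.mp h0; linarith
      have q1 : b 1 = a 1 := by
        have h0 : (b 1 - a 1) ^ 2 = 0 := by
          nlinarith [sq_nonneg (b 0 - a 0), sq_nonneg (b 2 - a 2)]
        have := sq_eq_zero_iff.mp h0; linarith
      have q2 : b 2 = a 2 := by
        have h0 : (b 2 - a 2) ^ 2 = 0 := by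
          nlinarith [sq_nonneg (b 0 - a 0), sq_nonneg (b 1 - a 1)]
        have := sq_eq_zero_iff.mp h0; linarith
      funext i
      fin_cases i
      · exact q0
      · exact q1
      · exact q2
    · right
      have hc1 : c = -1 := by linarith
      have hz : (b 0 + a 0) ^ 2 + (b 1 + a 1) ^ 2 + (b 2 + a 2) ^ 2 = 0 := by
        rw [Fin.sum_univ_three] at ha hb
        rw [hc, Fin.sum_univ_three] at hc1
        nlinarith
      have q0 : b 0 = -a 0 := by
        have h0 : (b 0 + a 0) ^ 2 = 0 := by
          nlinarith [sq_nonneg (b 1 + a 1), sq_nonneg (b 2 + a 2)]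
        have := sq_eq_zero_iff.mp h0; linarith
      have q1 : b 1 = -a 1 := by
        have h0 : (b 1 + a 1) ^ 2 = 0 := by
          nlinarith [sq_nonneg (b 0 + a 0), sq_nonneg (b 2 + a 2)]
        have := sq_eq_zero_iff.mp h0; linarith
      have q2 : b 2 = -a 2 := by
        have h0 : (b 2 + a 2) ^ 2 = 0 := by
          nlinarith [sq_nonneg (b 0 + a 0), sq_nonneg (b 1 + a 1)]
        have := sq_eq_zero_iff.mp h0; linarith
      funext i
      fin_cases i
      · exact q0
      · exact q1
      · exact q2
  · intro h
    have hcval : c ^ 2 = 1 := by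
      have hcc : c = 1 ∨ c = -1 := by
        rcases h with h | h <;> subst h
        · left
          rw [hc, ← ha]
          exact Finset.sum_congr rfl fun i _ => by rw [sq]
        · right
          rw [hc, Fin.sum_univ_three]
          rw [Fin.sum_univ_three] at ha
          simp only [Pi.neg_apply]
          linear_combination -ha
      rcases hcc with h' | h' <;> rw [h'] <;> norm_num
    have : s = 0 := by
      rw [hs, show 1 - c ^ 2 = 0 by linarith, Real.sqrt_zero]
    rw [this]
    norm_num
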